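/- Let ω1, ω3, ω5, ω7 solve the asymmetric center-manifold system with parameters ν > 0 and δ ∈ (√(2/3), √(3/2)), let η > 0 satisfy |δ² − 1| < η, and set A(t) = |ω1(t)|² + |ω3(t)|², B(t) = |ω5(t)|² + |ω7(t)|², A0 = A(0), B0 = B(0). Then for all t ≥ 0, A(t) ≥ A0 · exp[ −( 2ν max(1, 1/δ²) + 4√2 (η/δ²) √(A0 + B0) ) t ]. Consequently, with K₂ = 2 max(1, 1/δ²) + 6√2 √(A0 + B0), one has A(t) ≥ A0 e^{−K₂} for all 0 ≤ t ≤ min(1/ν, 1/η). -/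

import Mathlib

set_option maxHeartbeats 1000000

lemma hasDerivAt_sq_abs {f : ℝ → ℂ} {f' : ℂ} {t : ℝ} (hf : HasDerivAt f f' t) :
    HasDerivAt (fun s => ‖f s‖ ^ 2)
      (2 * ((f t).re * f'.re + (f t).im * f'.im)) t := by
  have hre : HasDerivAt (fun s => (f s).re) f'.re t :=
    (Complex.reCLM.hasFDerivAt.comp_hasDerivAt t hf)
  have him : HasDerivAt (fun s => (f s).im) f'.im t :=
    (Complex.imCLM.hasFDerivAt.comp_hasDerivAt t hf)
  have key : (fun s => ‖f s‖ ^ 2) = fun s => (f s).re ^ 2 + (f s).im ^ 2 := by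
    funext s; rw [Complex.sq_norm, Complex.normSq_apply]; ring
  rw [key]
  refine ((hre.pow 2).add (him.pow 2)).congr_deriv ?_
  push_cast
  ring

/-- For the asymmetric center-manifold system with ν > 0,
δ ∈ (√(2/3), √(3/2)) and |δ² − 1| < η, the low-mode energy A(t) = |ω1|² + |ω3|² satisfies
A(t) ≥ A0 exp[−(2ν max(1,1/δ²) + 4√2 (η/δ²) √(A0+B0)) t] for all t ≥ 0; consequently,
with K₂ = 2 max(1,1/δ²) + 6√2 √(A0+B0), A(t) ≥ A0 e^{−K₂} for 0 ≤ t ≤ min(1/ν, 1/η). -/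
theorem A_lower_bound_asymmetric
    (ν δ η : ℝ) (hν : 0 < ν) (hη : 0 < η)
    (hδ1 : Real.sqrt (2 / 3) < δ) (hδ2 : δ < Real.sqrt (3 / 2))
    (hδη : |δ ^ 2 - 1| < η)
    (ω1 ω3 ω5 ω7 : ℝ → ℂ)
    (h1 : ∀ t : ℝ, 0 ≤ t → HasDerivAt ω1
      (-((ν / δ ^ 2 : ℝ) : ℂ) * ω1 t
        + ((1 / (δ * (1 + δ ^ 2)) : ℝ) : ℂ) * (ω3 t * ω7 t - (starRingEnd ℂ) (ω3 t) * ω5 t)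
        + ((3 * δ ^ 6 / (2 * ν * (4 + δ ^ 2) * (1 + δ ^ 2) ^ 2) : ℝ) : ℂ) * ω1 t
            * ((‖ω5 t‖ ^ 2 + ‖ω7 t‖ ^ 2 : ℝ) : ℂ)) t)
    (h3 : ∀ t : ℝ, 0 ≤ t → HasDerivAt ω3
      (-(ν : ℂ) * ω3 t
        + ((δ ^ 3 / (1 + δ ^ 2) : ℝ) : ℂ) * ((starRingEnd ℂ) (ω1 t) * ω5 t - ω1 t * (starRingEnd ℂ) (ω7 t))
        + ((3 * δ ^ 2 / (2 * ν * (1 + 4 * δ ^ 2) * (1 + δ ^ 2) ^ 2) : ℝ) : ℂ) * ω3 t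
            * ((‖ω5 t‖ ^ 2 + ‖ω7 t‖ ^ 2 : ℝ) : ℂ)) t)
    (h5 : ∀ t : ℝ, 0 ≤ t → HasDerivAt ω5
      (-((ν * (1 + δ ^ 2) / δ ^ 2 : ℝ) : ℂ) * ω5 t
        - (((δ ^ 2 - 1) / δ : ℝ) : ℂ) * ω1 t * ω3 t
        - ((δ ^ 6 * (3 + δ ^ 2) / (2 * ν * (4 + δ ^ 2) * (1 + δ ^ 2)) : ℝ) : ℂ) * ω5 t
            * ((‖ω1 t‖ ^ 2 : ℝ) : ℂ)
        - (((1 + 3 * δ ^ 2) / (2 * ν * δ ^ 2 * (1 + 4 * δ ^ 2) * (1 + δ ^ 2)) : ℝ) : ℂ) * ω5 t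
            * ((‖ω3 t‖ ^ 2 : ℝ) : ℂ)) t)
    (h7 : ∀ t : ℝ, 0 ≤ t → HasDerivAt ω7
      (-((ν * (1 + δ ^ 2) / δ ^ 2 : ℝ) : ℂ) * ω7 t
        + (((δ ^ 2 - 1) / δ : ℝ) : ℂ) * ω1 t * (starRingEnd ℂ) (ω3 t)
        - ((δ ^ 6 * (3 + δ ^ 2) / (2 * ν * (4 + δ ^ 2) * (1 + δ ^ 2)) : ℝ) : ℂ) * ω7 t
            * ((‖ω1 t‖ ^ 2 : ℝ) : ℂ)
        - (((1 + 3 * δ ^ 2) / (2 * ν * δ ^ 2 * (1 + 4 * δ ^ 2) * (1 + δ ^ 2)) : ℝ) : ℂ) * ω7 t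
            * ((‖ω3 t‖ ^ 2 : ℝ) : ℂ)) t)
    (A0 B0 : ℝ)
    (hA0 : ‖ω1 0‖ ^ 2 + ‖ω3 0‖ ^ 2 = A0)
    (hB0 : ‖ω5 0‖ ^ 2 + ‖ω7 0‖ ^ 2 = B0) :
    (∀ t : ℝ, 0 ≤ t →
      A0 * Real.exp (-(2 * ν * max 1 (1 / δ ^ 2)
            + 4 * Real.sqrt 2 * (η / δ ^ 2) * Real.sqrt (A0 + B0)) * t)
        ≤ ‖ω1 t‖ ^ 2 + ‖ω3 t‖ ^ 2)
      ∧ (∀ t : ℝ, 0 ≤ t → t ≤ min (1 / ν) (1 / η) →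
          A0 * Real.exp (-(2 * max 1 (1 / δ ^ 2) + 6 * Real.sqrt 2 * Real.sqrt (A0 + B0)))
            ≤ ‖ω1 t‖ ^ 2 + ‖ω3 t‖ ^ 2) := by
  have hδ0 : 0 < δ := lt_trans (Real.sqrt_pos.mpr (by norm_num)) hδ1
  have hδlo : 2/3 < δ ^ 2 := (Real.sqrt_lt' hδ0).1 hδ1
  have hδhi : δ ^ 2 < 3/2 := (Real.lt_sqrt hδ0.le).1 hδ2
  have hA0nn : 0 ≤ A0 := by rw [← hA0]; positivity
  have hAB0nn : 0 ≤ A0 + B0 := by rw [← hA0, ← hB0]; positivity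
  set Mv : ℝ := max 1 (1 / δ ^ 2) with hMv
  set R1 : ℝ := Real.sqrt (A0 + B0) with hR1
  have hR1nn : 0 ≤ R1 := Real.sqrt_nonneg _
  have hMv1 : (1:ℝ) ≤ Mv := le_max_left _ _
  have hMvδ : 1 / δ ^ 2 ≤ Mv := le_max_right _ _
  clear_value Mv R1
  set K : ℝ := 2 * ν * Mv + 4 * Real.sqrt 2 * (η / δ ^ 2) * R1 with hK
  clear_value K
  set X1 : ℝ → ℝ := fun s => (ω1 s * (starRingEnd ℂ) (ω3 s) * (starRingEnd ℂ) (ω7 s)).re with hX1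
  set X2 : ℝ → ℝ := fun s => ((starRingEnd ℂ) (ω1 s) * (starRingEnd ℂ) (ω3 s) * ω5 s).re with hX2
  clear_value X1 X2
  set dA : ℝ → ℝ := fun s =>
    -2*(ν/δ^2)*‖ω1 s‖^2 - 2*ν*‖ω3 s‖^2
    + 2*(1/(δ*(1+δ^2)) - δ^3/(1+δ^2))*(X1 s - X2 s)
    + 2*(3*δ^6/(2*ν*(4+δ^2)*(1+δ^2)^2))*‖ω1 s‖^2*(‖ω5 s‖^2+‖ω7 s‖^2)
    + 2*(3*δ^2/(2*ν*(1+4*δ^2)*(1+δ^2)^2))*‖ω3 s‖^2*(‖ω5 s‖^2+‖ω7 s‖^2)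
    with hdA
  set dB : ℝ → ℝ := fun s =>
    -2*(ν*(1+δ^2)/δ^2)*(‖ω5 s‖^2+‖ω7 s‖^2)
    + 2*((δ^2-1)/δ)*(X1 s - X2 s)
    - 2*(δ^6*(3+δ^2)/(2*ν*(4+δ^2)*(1+δ^2)))*(‖ω5 s‖^2+‖ω7 s‖^2)*‖ω1 s‖^2
    - 2*((1+3*δ^2)/(2*ν*δ^2*(1+4*δ^2)*(1+δ^2)))*(‖ω5 s‖^2+‖ω7 s‖^2)*‖ω3 s‖^2
    with hdB
  clear_value dA dB
  -- derivative of the low-mode energy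
  have hAd : ∀ t : ℝ, 0 ≤ t →
      HasDerivAt (fun s => ‖ω1 s‖ ^ 2 + ‖ω3 s‖ ^ 2) (dA t) t := by
    intro t ht
    have hd := (hasDerivAt_sq_abs (h1 t ht)).add (hasDerivAt_sq_abs (h3 t ht))
    refine hd.congr_deriv ?_
    simp only [hdA, hX1, hX2, Complex.mul_re, Complex.mul_im, Complex.add_re, Complex.add_im,
      Complex.sub_re, Complex.sub_im, Complex.neg_re, Complex.neg_im, Complex.conj_re,
      Complex.conj_im, Complex.ofReal_re, Complex.ofReal_im, Complex.sq_norm, Complex.normSq_apply]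
    ring
  -- derivative of the high-mode energy
  have hBd : ∀ t : ℝ, 0 ≤ t →
      HasDerivAt (fun s => ‖ω5 s‖ ^ 2 + ‖ω7 s‖ ^ 2) (dB t) t := by
    intro t ht
    have hd := (hasDerivAt_sq_abs (h5 t ht)).add (hasDerivAt_sq_abs (h7 t ht))
    refine hd.congr_deriv ?_
    simp only [hdB, hX1, hX2, Complex.mul_re, Complex.mul_im, Complex.add_re, Complex.add_im,
      Complex.sub_re, Complex.sub_im, Complex.neg_re, Complex.neg_im, Complex.conj_re,
      Complex.conj_im, Complex.ofReal_re, Complex.ofReal_im, Complex.sq_norm, Complex.normSq_apply]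
    ring
  -- total energy is nonincreasing
  set Sf : ℝ → ℝ := fun s =>
    (‖ω1 s‖ ^ 2 + ‖ω3 s‖ ^ 2)
      + (‖ω5 s‖ ^ 2 + ‖ω7 s‖ ^ 2) with hSf
  clear_value Sf
  have hSd : ∀ t : ℝ, 0 ≤ t → HasDerivAt Sf (dA t + dB t) t := by
    intro t ht
    rw [hSf]
    exact (hAd t ht).add (hBd t ht)
  have hcancel : (1/(δ*(1+δ^2)) - δ^3/(1+δ^2)) + (δ^2-1)/δ = 0 := by
    field_simp
    ring
  have hdSnonpos : ∀ t : ℝ, 0 ≤ t → dA t + dB t ≤ 0 := by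
    intro t ht
    have hk1 : 3*δ^6/(2*ν*(4+δ^2)*(1+δ^2)^2) ≤ δ^6*(3+δ^2)/(2*ν*(4+δ^2)*(1+δ^2)) := by
      rw [div_le_div_iff₀ (by positivity) (by positivity)]
      have base : (3:ℝ) ≤ (3+δ^2)*(1+δ^2) := by linarith [sq_nonneg δ, sq_nonneg (δ^2)]
      have hC : (0:ℝ) ≤ 2*ν*(4+δ^2)*(1+δ^2)*δ^6 := by positivity
      linarith [mul_le_mul_of_nonneg_left base hC]
    have hk3 : 3*δ^2/(2*ν*(1+4*δ^2)*(1+δ^2)^2) ≤ (1+3*δ^2)/(2*ν*δ^2*(1+4*δ^2)*(1+δ^2)) := by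
      rw [div_le_div_iff₀ (by positivity) (by positivity)]
      have base : 3*δ^4 ≤ (1+3*δ^2)*(1+δ^2) := by linarith [sq_nonneg δ, sq_nonneg (δ^2)]
      have hC : (0:ℝ) ≤ 2*ν*(1+4*δ^2)*(1+δ^2) := by positivity
      linarith [mul_le_mul_of_nonneg_left base hC]
    have hsum : dA t + dB t =
        -2*(ν/δ^2)*‖ω1 t‖^2 - 2*ν*‖ω3 t‖^2
        - 2*(ν*(1+δ^2)/δ^2)*(‖ω5 t‖^2+‖ω7 t‖^2)
        + 2*((1/(δ*(1+δ^2)) - δ^3/(1+δ^2)) + (δ^2-1)/δ)*(X1 t - X2 t)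
        - 2*(δ^6*(3+δ^2)/(2*ν*(4+δ^2)*(1+δ^2)) - 3*δ^6/(2*ν*(4+δ^2)*(1+δ^2)^2))
            * ‖ω1 t‖^2 * (‖ω5 t‖^2+‖ω7 t‖^2)
        - 2*((1+3*δ^2)/(2*ν*δ^2*(1+4*δ^2)*(1+δ^2)) - 3*δ^2/(2*ν*(1+4*δ^2)*(1+δ^2)^2))
            * ‖ω3 t‖^2 * (‖ω5 t‖^2+‖ω7 t‖^2) := by
      simp only [hdA, hdB]
      ring
    rw [hsum, hcancel]
    have p1 : 0 ≤ (ν/δ^2)*‖ω1 t‖^2 := by positivity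
    have p3 : 0 ≤ ν*‖ω3 t‖^2 := by positivity
    have p5 : 0 ≤ (ν*(1+δ^2)/δ^2)*(‖ω5 t‖^2+‖ω7 t‖^2) := by positivity
    have q1 : 0 ≤ (δ^6*(3+δ^2)/(2*ν*(4+δ^2)*(1+δ^2)) - 3*δ^6/(2*ν*(4+δ^2)*(1+δ^2)^2))
        * ‖ω1 t‖^2 * (‖ω5 t‖^2+‖ω7 t‖^2) := by
      apply mul_nonneg (mul_nonneg (by linarith) (by positivity)) (by positivity)
    have q3 : 0 ≤ ((1+3*δ^2)/(2*ν*δ^2*(1+4*δ^2)*(1+δ^2)) - 3*δ^2/(2*ν*(1+4*δ^2)*(1+δ^2)^2))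
        * ‖ω3 t‖^2 * (‖ω5 t‖^2+‖ω7 t‖^2) := by
      apply mul_nonneg (mul_nonneg (by linarith) (by positivity)) (by positivity)
    linarith [p1, p3, p5, q1, q3]
  have hSanti : AntitoneOn Sf (Set.Ici 0) := by
    apply antitoneOn_of_deriv_nonpos (convex_Ici 0)
    · intro t ht
      exact (hSd t ht).continuousAt.continuousWithinAt
    · intro t ht
      rw [interior_Ici] at ht
      exact ((hSd t (le_of_lt ht)).differentiableAt).differentiableWithinAt
    · intro t ht
      rw [interior_Ici] at ht
      rw [(hSd t ht.le).deriv]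
      exact hdSnonpos t ht.le
  have hBle : ∀ t : ℝ, 0 ≤ t →
      ‖ω5 t‖^2 + ‖ω7 t‖^2 ≤ A0 + B0 := by
    intro t ht
    have h := hSanti Set.self_mem_Ici (Set.mem_Ici.2 ht) ht
    simp only [hSf] at h
    have h0 : ‖ω1 t‖^2 + ‖ω3 t‖^2 ≥ 0 := by positivity
    rw [hA0, hB0] at h
    linarith
  -- key pointwise inequality
  have hδ4 : δ ≤ 4 := by linarith [sq_nonneg (δ - 4), hδhi]
  have hcoefeq : 1/(δ*(1+δ^2)) - δ^3/(1+δ^2) = (1-δ^2)/δ := by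
    field_simp
    ring
  have hKey : ∀ t : ℝ, 0 ≤ t →
      0 ≤ dA t + K * (‖ω1 t‖^2 + ‖ω3 t‖^2) := by
    intro t ht
    set a : ℝ := ‖ω1 t‖ with ha
    set b : ℝ := ‖ω3 t‖ with hb
    set c : ℝ := ‖ω5 t‖ with hc
    set d : ℝ := ‖ω7 t‖ with hd
    clear_value a b c d
    have hann : 0 ≤ a := by rw [ha]; positivity
    have hbnn : 0 ≤ b := by rw [hb]; positivity
    have hcnn : 0 ≤ c := by rw [hc]; positivity
    have hdnn : 0 ≤ d := by rw [hd]; positivity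
    have hab : a*b ≤ (a^2+b^2)/2 := by linarith [sq_nonneg (a-b)]
    have hcd : c + d ≤ Real.sqrt 2 * R1 := by
      have h2 : c^2 + d^2 ≤ A0 + B0 := by rw [hc, hd]; exact hBle t ht
      have h1 : (c+d)^2 ≤ 2*(A0+B0) := by linarith [sq_nonneg (c-d)]
      calc c + d = Real.sqrt ((c+d)^2) := (Real.sqrt_sq (by positivity)).symm
        _ ≤ Real.sqrt (2*(A0+B0)) := Real.sqrt_le_sqrt h1
        _ = Real.sqrt 2 * R1 := by rw [hR1]; exact Real.sqrt_mul (by norm_num) _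
    have hX1b : |X1 t| ≤ a*b*d := by
      have h := Complex.abs_re_le_norm (ω1 t * (starRingEnd ℂ) (ω3 t) * (starRingEnd ℂ) (ω7 t))
      simpa [hX1, map_mul, Complex.norm_conj, ha, hb, hd] using h
    have hX2b : |X2 t| ≤ a*b*c := by
      have h := Complex.abs_re_le_norm ((starRingEnd ℂ) (ω1 t) * (starRingEnd ℂ) (ω3 t) * ω5 t)
      simpa [hX2, map_mul, Complex.norm_conj, ha, hb, hc] using h
    have hCa : |1/(δ*(1+δ^2)) - δ^3/(1+δ^2)| ≤ η/δ := by
      rw [hcoefeq, abs_div, abs_of_pos hδ0]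
      have hnum : |1-δ^2| ≤ η := by rw [abs_sub_comm]; linarith
      gcongr
    have hXsub : |X1 t - X2 t| ≤ a*b*d + a*b*c := (abs_sub _ _).trans (by
      have := hX1b; have := hX2b; linarith)
    have hcrossabs : |2*(1/(δ*(1+δ^2)) - δ^3/(1+δ^2))*(X1 t - X2 t)|
        ≤ 2*(η/δ)*(a*b*d + a*b*c) := by
      rw [abs_mul, abs_mul, abs_two]
      apply mul_le_mul (by linarith [hCa]) hXsub (abs_nonneg _) (by positivity)
    have hcross : -(2*(η/δ)*(a*b*d + a*b*c))
        ≤ 2*(1/(δ*(1+δ^2)) - δ^3/(1+δ^2))*(X1 t - X2 t) := by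
      have := neg_abs_le (2*(1/(δ*(1+δ^2)) - δ^3/(1+δ^2))*(X1 t - X2 t))
      linarith [hcrossabs]
    have hδ4' : η/δ ≤ 4*(η/δ^2) := by
      rw [show (4:ℝ)*(η/δ^2) = (4*η)/δ^2 by ring, div_le_div_iff₀ hδ0 (by positivity)]
      linarith [mul_nonneg (mul_nonneg (sub_nonneg.2 hδ4) hη.le) hδ0.le]
    have s1 : a*b*(c+d) ≤ ((a^2+b^2)/2)*(Real.sqrt 2*R1) :=
      mul_le_mul hab hcd (by positivity) (by positivity)
    have s2 : (η/δ)*(a*b*(c+d)) ≤ (η/δ)*(((a^2+b^2)/2)*(Real.sqrt 2*R1)) :=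
      mul_le_mul_of_nonneg_left s1 (by positivity)
    have s3 : (η/δ)*(((a^2+b^2)/2)*(Real.sqrt 2*R1))
        ≤ (4*(η/δ^2))*(((a^2+b^2)/2)*(Real.sqrt 2*R1)) :=
      mul_le_mul_of_nonneg_right hδ4' (by positivity)
    have s4 := s2.trans s3
    have hM1 : (ν/δ^2)*a^2 ≤ ν*Mv*a^2 := by
      have h : ν/δ^2 ≤ ν*Mv := by
        calc ν/δ^2 = ν*(1/δ^2) := by ring
          _ ≤ ν*Mv := mul_le_mul_of_nonneg_left hMvδ hν.le
      exact mul_le_mul_of_nonneg_right h (sq_nonneg a)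
    have hM3 : ν*b^2 ≤ ν*Mv*b^2 := by
      have h : ν ≤ ν*Mv := by linarith [mul_le_mul_of_nonneg_left hMv1 hν.le]
      exact mul_le_mul_of_nonneg_right h (sq_nonneg b)
    have cub1 : 0 ≤ 2*(3*δ^6/(2*ν*(4+δ^2)*(1+δ^2)^2))*a^2*(c^2+d^2) := by positivity
    have cub3 : 0 ≤ 2*(3*δ^2/(2*ν*(1+4*δ^2)*(1+δ^2)^2))*b^2*(c^2+d^2) := by positivity
    have hdAval : dA t = -2*(ν/δ^2)*a^2 - 2*ν*b^2
        + 2*(1/(δ*(1+δ^2)) - δ^3/(1+δ^2))*(X1 t - X2 t)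
        + 2*(3*δ^6/(2*ν*(4+δ^2)*(1+δ^2)^2))*a^2*(c^2+d^2)
        + 2*(3*δ^2/(2*ν*(1+4*δ^2)*(1+δ^2)^2))*b^2*(c^2+d^2) := by
      simp only [hdA, ha, hb, hc, hd]
    rw [hdAval, hK]
    linarith [hcross, s4, hM1, hM3, cub1, cub3]
  -- monotonicity of the Gronwall quantity
  set g : ℝ → ℝ := fun s =>
    (‖ω1 s‖ ^ 2 + ‖ω3 s‖ ^ 2) * Real.exp (K*s) with hg
  clear_value g
  have hgd : ∀ t : ℝ, 0 ≤ t → HasDerivAt g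
      (dA t * Real.exp (K*t)
        + (‖ω1 t‖ ^ 2 + ‖ω3 t‖ ^ 2) * (Real.exp (K*t)*K)) t := by
    intro t ht
    have hexp : HasDerivAt (fun s => Real.exp (K*s)) (Real.exp (K*t)*K) t := by
      exact (Real.hasDerivAt_exp (K*t)).comp t (((hasDerivAt_id t).const_mul K).congr_deriv (mul_one K))
    rw [hg]
    exact (hAd t ht).mul hexp
  have hgmono : MonotoneOn g (Set.Ici 0) := by
    apply monotoneOn_of_deriv_nonneg (convex_Ici 0)
    · intro t ht
      exact (hgd t ht).continuousAt.continuousWithinAt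
    · intro t ht
      rw [interior_Ici] at ht
      exact ((hgd t (le_of_lt ht)).differentiableAt).differentiableWithinAt
    · intro t ht
      rw [interior_Ici] at ht
      rw [(hgd t ht.le).deriv]
      linarith [mul_nonneg (hKey t ht.le) (Real.exp_pos (K*t)).le]
  have part1 : ∀ t : ℝ, 0 ≤ t →
      A0 * Real.exp (-K * t) ≤ ‖ω1 t‖ ^ 2 + ‖ω3 t‖ ^ 2 := by
    intro t ht
    have h := hgmono Set.self_mem_Ici (Set.mem_Ici.2 ht) ht
    simp only [hg] at h
    rw [mul_zero, Real.exp_zero, mul_one, hA0] at h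
    rw [show -K*t = -(K*t) by ring, Real.exp_neg, ← div_eq_mul_inv,
      div_le_iff₀ (Real.exp_pos _)]
    exact h
  constructor
  · exact part1
  · intro t ht htm
    have htν : t * ν ≤ 1 := by
      have := le_trans htm (min_le_left _ _)
      rwa [le_div_iff₀ hν] at this
    have htη : t * η ≤ 1 := by
      have := le_trans htm (min_le_right _ _)
      rwa [le_div_iff₀ hη] at this
    have hinv : 1/δ^2 ≤ 3/2 := by
      rw [div_le_iff₀ (by positivity)]
      linarith
    have s11 : (2*Mv)*(ν*t) ≤ (2*Mv)*1 :=
      mul_le_mul_of_nonneg_left (by linarith) (by linarith)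
    have hu1 : η / δ ^ 2 * t ≤ 3/2 := by
      rw [div_mul_eq_mul_div, div_le_iff₀ (by positivity)]
      nlinarith [htη, hδlo, hη.le, ht]
    have s21 : 4*Real.sqrt 2*R1*(η/δ^2*t) ≤ 4*Real.sqrt 2*R1*(3/2) :=
      mul_le_mul_of_nonneg_left hu1 (by positivity)
    have hKt : K * t ≤ 2*Mv + 6*Real.sqrt 2*R1 := by
      rw [hK]
      linarith [s11, s21]
    have hexpmono : Real.exp (-(2*Mv + 6*Real.sqrt 2*R1)) ≤ Real.exp (-K*t) := by
      apply Real.exp_le_exp.2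
      linarith
    calc A0 * Real.exp (-(2*Mv + 6*Real.sqrt 2*R1))
        ≤ A0 * Real.exp (-K*t) := mul_le_mul_of_nonneg_left hexpmono hA0nn
      _ ≤ ‖ω1 t‖ ^ 2 + ‖ω3 t‖ ^ 2 := part1 t ht
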